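/- If λ_d < λ_f < 2λ_d, λ_d/λ_f < γ, and η > 1/(1 + (1-λ_d/λ_f)/ln(1/(2(1-λ_d/λ_f)))), then the expression (λ_f/(2λ_d))·(γ + z(β/(1-η+β) - γ)) - 1/2, with β = -(η λ_d/λ_f)/ln(2-2λ_d/λ_f), is strictly positive at z = 0 and at z = 1, and hence (being affine in z) strictly positive for all z ∈ [0,1]. -/

import Mathlib

theorem stmt19 (lamd lamf eta gamma : ℝ) (hd : 0 < lamd) (hf : 0 < lamf)
    (hg : 0 < gamma) (heta0 : 0 < eta) (heta1 : eta < 1)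
    (h1 : lamd < lamf) (h2 : lamf < 2 * lamd)
    (hgam : lamd / lamf < gamma)
    (heta : 1 / (1 + (1 - lamd / lamf) / Real.log (1 / (2 * (1 - lamd / lamf)))) < eta)
    (beta : ℝ) (hbeta : beta = -(eta * lamd / lamf) / Real.log (2 - 2 * lamd / lamf)) :
    (0 < lamf / (2 * lamd) * (gamma + 0 * (beta / (1 - eta + beta) - gamma)) - 1 / 2) ∧
    (0 < lamf / (2 * lamd) * (gamma + 1 * (beta / (1 - eta + beta) - gamma)) - 1 / 2) ∧
    ∀ z ∈ Set.Icc (0 : ℝ) 1,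
      0 < lamf / (2 * lamd) * (gamma + z * (beta / (1 - eta + beta) - gamma)) - 1 / 2 := by
  set r : ℝ := lamd / lamf with hr
  have hr1 : r < 1 := (div_lt_one hf).2 h1
  have hr2 : 1 / 2 < r := by
    rw [hr, lt_div_iff₀ hf]; linarith
  have hr0 : 0 < r := div_pos hd hf
  have harg : 1 < 1 / (2 * (1 - r)) := by
    rw [lt_div_iff₀ (by linarith)]; linarith
  set L : ℝ := Real.log (1 / (2 * (1 - r))) with hL
  have hLpos : 0 < L := Real.log_pos harg
  have hlogeq : Real.log (2 - 2 * r) = -L := by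
    rw [hL, Real.log_div one_ne_zero (by linarith : (2 * (1 - r)) ≠ 0),
      Real.log_one]
    ring_nf
  have hbeta' : beta = eta * r / L := by
    have h3 : 2 - 2 * lamd / lamf = 2 - 2 * r := by rw [hr]; ring
    rw [hbeta, h3, hlogeq, div_neg, neg_div, neg_neg, hr]
    ring
  have hbpos : 0 < beta := by
    rw [hbeta']; exact div_pos (mul_pos heta0 hr0) hLpos
  have hden : 0 < 1 - eta + beta := by linarith
  -- key inequality from heta : L < eta * (L + (1 - r))
  have hkey : L < eta * (L + (1 - r)) := by
    have hdpos : 0 < 1 + (1 - r) / L := by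
      have : 0 < (1 - r) / L := div_pos (by linarith) hLpos
      linarith
    have h := (div_lt_iff₀ hdpos).1 heta
    have h' : 1 < eta * (1 + (1 - r) / L) := by linarith
    have h'' : L * 1 < L * (eta * (1 + (1 - r) / L)) :=
      (mul_lt_mul_iff_right₀ hLpos).2 h'
    have h''' : L * (eta * (1 + (1 - r) / L)) = eta * (L + (1 - r)) := by
      field_simp
    linarith [h''' ▸ h'']
  -- beta / (1 - eta + beta) > r
  have hb2 : r * (1 - eta) < beta * (1 - r) := by
    have h3 : beta * (1 - r) = eta * r * (1 - r) / L := by rw [hbeta']; ring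
    rw [h3, lt_div_iff₀ hLpos]
    nlinarith [mul_lt_mul_of_pos_left hkey hr0]
  have hB : r < beta / (1 - eta + beta) := by
    rw [lt_div_iff₀ hden]
    nlinarith [hb2]
  have hA : 0 < lamf / (2 * lamd) := by positivity
  have hAr : lamf / (2 * lamd) * r = 1 / 2 := by
    show lamf / (2 * lamd) * (lamd / lamf) = 1 / 2
    field_simp
  have h0 : 0 < lamf / (2 * lamd) * gamma - 1 / 2 := by
    have h4 := (mul_lt_mul_iff_right₀ hA).2 hgam
    rw [hAr] at h4
    linarith
  have h1' : 0 < lamf / (2 * lamd) * (beta / (1 - eta + beta)) - 1 / 2 := by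
    have h4 := (mul_lt_mul_iff_right₀ hA).2 hB
    rw [hAr] at h4
    linarith
  refine ⟨by linarith, by nlinarith, ?_⟩
  intro z hz
  rcases eq_or_lt_of_le hz.1 with hz0 | hz0
  · rw [← hz0]; simpa using h0
  · nlinarith [mul_pos hz0 h1', mul_nonneg (sub_nonneg.2 hz.2) h0.le]
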